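/- If f : A → B is a flat ring morphism, then B[{f(M_i)B / f(a_i)}_{i∈I}] ≅ B ⊗_A A[{M_i/a_i}_{i∈I}] canonically as B-algebras. -/

import Mathlib

open scoped TensorProduct

noncomputable section

variable {A : Type*} [CommRing A] {I : Type*}

/-- The multiplicative submonoid generated by the elements `a_i` of the multi-center. -/
def dilSubmonoid (a : I → A) : Submonoid A := Submonoid.closure (Set.range a)

lemma a_mem_dilSubmonoid (a : I → A) (i : I) : a i ∈ dilSubmonoid a :=
  Submonoid.subset_closure ⟨i, rfl⟩

/-- `a^ν` for `ν ∈ ⊕_{i∈I} ℕ`. -/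
def apow (a : I → A) (ν : I →₀ ℕ) : A := ν.prod fun i n => a i ^ n

lemma apow_mem (a : I → A) (ν : I →₀ ℕ) : apow a ν ∈ dilSubmonoid a :=
  Submonoid.prod_mem _ fun i _ => pow_mem (a_mem_dilSubmonoid a i) _

/-- The product ideal `L^ν = ∏_i (M_i + (a_i))^{ν_i}`. -/
def Lpow (M : I → Ideal A) (a : I → A) (ν : I →₀ ℕ) : Ideal A :=
  ν.prod fun i n => (M i + Ideal.span {a i}) ^ n

/-- The fraction `m / a_i` in the localization at the submonoid generated by the `a_i`. -/
def dilFrac (a : I → A) (i : I) (m : A) : Localization (dilSubmonoid a) :=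
  Localization.mk m ⟨a i, a_mem_dilSubmonoid a i⟩

/-- The multi-centered dilatation `A[{M_i/a_i}]`, realized as the sub-`A`-algebra of the
localization `S⁻¹A` generated by the fractions `m / a_i` with `m ∈ M_i`. -/
def dilatation (M : I → Ideal A) (a : I → A) :
    Subalgebra A (Localization (dilSubmonoid a)) :=
  Algebra.adjoin A (⋃ i, dilFrac a i '' (M i))
set_option synthInstance.maxHeartbeats 1000000
set_option maxHeartbeats 1000000


/-- The canonical map between localizations induced by the ring morphism `algebraMap A B`. -/
def locMapBase (a : I → A) (B : Type*) [CommRing B] [Algebra A B] :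
    Localization (dilSubmonoid a) →+*
      Localization (dilSubmonoid fun i => algebraMap A B (a i)) :=
  IsLocalization.map (M := dilSubmonoid a)
    (T := dilSubmonoid fun i => algebraMap A B (a i))
    (Localization (dilSubmonoid fun i => algebraMap A B (a i))) (algebraMap A B)
    (Submonoid.closure_le.mpr (by
      rintro x ⟨i, rfl⟩
      exact a_mem_dilSubmonoid (fun i => algebraMap A B (a i)) i))

section Aux

variable (a : I → A) (B : Type*) [CommRing B] [Algebra A B]

/-- Auxiliary algebra structure via `locMapBase`. -/
def LtAlgLs : Algebra (Localization (dilSubmonoid a))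
    (Localization (dilSubmonoid fun i => algebraMap A B (a i))) :=
  (locMapBase a B).toAlgebra

attribute [local instance] LtAlgLs

theorem towerALsLt : IsScalarTower A (Localization (dilSubmonoid a))
    (Localization (dilSubmonoid fun i => algebraMap A B (a i))) :=
  IsScalarTower.of_algebraMap_eq' (by
    show algebraMap A (Localization (dilSubmonoid fun i => algebraMap A B (a i)))
      = (locMapBase a B).comp (algebraMap A (Localization (dilSubmonoid a)))
    unfold locMapBase
    exact (IsScalarTower.algebraMap_eq A B _).trans (IsLocalization.map_comp _).symm)

attribute [local instance] towerALsLt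

theorem algebraMapSubmonoid_dilSubmonoid :
    Algebra.algebraMapSubmonoid B (dilSubmonoid a)
      = dilSubmonoid (fun i => algebraMap A B (a i)) := by
  show Submonoid.map (algebraMap A B) (Submonoid.closure (Set.range a)) = _
  rw [MonoidHom.map_mclosure, ← Set.range_comp]
  rfl

theorem isLocLt : IsLocalization (Algebra.algebraMapSubmonoid B (dilSubmonoid a))
    (Localization (dilSubmonoid fun i => algebraMap A B (a i))) := by
  rw [algebraMapSubmonoid_dilSubmonoid]
  exact Localization.isLocalization

theorem isPushoutLt : Algebra.IsPushout A B (Localization (dilSubmonoid a))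
    (Localization (dilSubmonoid fun i => algebraMap A B (a i))) :=
  haveI := isLocLt a B
  Algebra.isPushout_of_isLocalization (dilSubmonoid a) (Localization (dilSubmonoid a)) B
    (Localization (dilSubmonoid fun i => algebraMap A B (a i)))

/-- The canonical `B`-algebra map `B ⊗ S⁻¹A → (fS)⁻¹B`. -/
def psiMap : (B ⊗[A] Localization (dilSubmonoid a)) →ₐ[B]
    Localization (dilSubmonoid fun i => algebraMap A B (a i)) :=
  Algebra.TensorProduct.lift
    (Algebra.ofId B _)
    (IsScalarTower.toAlgHom A (Localization (dilSubmonoid a)) _)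
    (fun _ _ => Commute.all _ _)

theorem psiMap_tmul (b : B) (x : Localization (dilSubmonoid a)) :
    psiMap a B (b ⊗ₜ[A] x) = algebraMap B _ b * locMapBase a B x := rfl

theorem psiMap_eq (z : B ⊗[A] Localization (dilSubmonoid a)) :
    psiMap a B z = (isPushoutLt a B).out.equiv z := by
  induction z using TensorProduct.induction_on with
  | zero => simp
  | tmul b x =>
      rw [psiMap_tmul, IsBaseChange.equiv_tmul]
      rw [Algebra.smul_def]
      rfl
  | add x y hx hy => simp [map_add, hx, hy]

theorem psiMap_bijective : Function.Bijective (psiMap a B) := by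
  have : ⇑(psiMap a B) = ⇑(isPushoutLt a B).out.equiv := funext (psiMap_eq a B)
  rw [this]
  exact (isPushoutLt a B).out.equiv.bijective


theorem locMapBase_dilFrac (i : I) (m : A) :
    locMapBase a B (dilFrac a i m)
      = dilFrac (fun i => algebraMap A B (a i)) i (algebraMap A B m) := by
  unfold locMapBase dilFrac
  rw [Localization.mk_eq_mk', Localization.mk_eq_mk']
  exact IsLocalization.map_mk' _ _ _

theorem locMapBase_algebraMap (r : A) :
    locMapBase a B (algebraMap A (Localization (dilSubmonoid a)) r)
      = algebraMap B (Localization (dilSubmonoid fun i => algebraMap A B (a i)))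
          (algebraMap A B r) := by
  unfold locMapBase
  exact IsLocalization.map_eq _ _

theorem locMapBase_mem_dilatation (M : I → Ideal A) {y : Localization (dilSubmonoid a)}
    (hy : y ∈ dilatation M a) :
    locMapBase a B y ∈ dilatation (fun i => (M i).map (algebraMap A B))
      (fun i => algebraMap A B (a i)) := by
  induction hy using Algebra.adjoin_induction with
  | mem x hx =>
      obtain ⟨i, m, hm, rfl⟩ := by simpa only [Set.mem_iUnion, Set.mem_image] using hx
      rw [locMapBase_dilFrac]
      exact Algebra.subset_adjoin (Set.mem_iUnion.2
        ⟨i, Set.mem_image_of_mem _ (Ideal.mem_map_of_mem _ hm)⟩)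
  | algebraMap r =>
      rw [locMapBase_algebraMap]
      exact Subalgebra.algebraMap_mem _ _
  | add x y _ _ hx hy => rw [map_add]; exact add_mem hx hy
  | mul x y _ _ hx hy => rw [map_mul]; exact mul_mem hx hy

/-- The canonical `B`-algebra map `B ⊗ A[M/a] → (fS)⁻¹B`. -/
def phiMap (M : I → Ideal A) :
    (B ⊗[A] ↥(dilatation M a)) →ₐ[B]
      Localization (dilSubmonoid fun i => algebraMap A B (a i)) :=
  (psiMap a B).comp (Algebra.TensorProduct.map (AlgHom.id B B) (dilatation M a).val)

theorem phiMap_tmul (M : I → Ideal A) (b : B) (d : ↥(dilatation M a)) :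
    phiMap a B M (b ⊗ₜ[A] d)
      = algebraMap B _ b * locMapBase a B (d : Localization (dilSubmonoid a)) := by
  rw [phiMap, AlgHom.comp_apply, Algebra.TensorProduct.map_tmul]
  exact psiMap_tmul a B b _

theorem phiMap_injective (M : I → Ideal A) [Module.Flat A B] :
    Function.Injective (phiMap a B M) := by
  rw [phiMap]
  simp only [AlgHom.coe_comp]
  apply Function.Injective.comp (psiMap_bijective a B).injective
  have h1 : Function.Injective
      (LinearMap.lTensor B (dilatation M a).val.toLinearMap) :=
    Module.Flat.lTensor_preserves_injective_linearMap _ Subtype.val_injective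
  have h2 : ⇑(Algebra.TensorProduct.map (AlgHom.id B B) (dilatation M a).val)
      = ⇑(LinearMap.lTensor B (dilatation M a).val.toLinearMap) := by
    funext z
    induction z using TensorProduct.induction_on with
    | zero => simp
    | tmul b d => rfl
    | add x y hx hy => simp only [map_add, hx, hy]
  rw [h2]
  exact h1

theorem phiMap_range (M : I → Ideal A) :
    (phiMap a B M).range
      = dilatation (fun i => (M i).map (algebraMap A B))
          (fun i => algebraMap A B (a i)) := by
  apply le_antisymm
  · rintro _ ⟨z, rfl⟩
    induction z using TensorProduct.induction_on with
    | zero => rw [map_zero]; exact zero_mem _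
    | tmul b d =>
        show phiMap a B M (b ⊗ₜ[A] d) ∈ _
        rw [phiMap_tmul]
        exact mul_mem (Subalgebra.algebraMap_mem _ _)
          (locMapBase_mem_dilatation a B M d.2)
    | add x y hx hy => rw [map_add]; exact add_mem hx hy
  · apply Algebra.adjoin_le
    rintro y hy
    simp only [Set.mem_iUnion, Set.mem_image] at hy
    obtain ⟨i, n, hn, rfl⟩ := hy
    have hn' : n ∈ Ideal.span ((algebraMap A B) '' (M i : Set A)) := hn
    clear hn
    induction hn' using Submodule.span_induction with
    | mem x hx =>
        obtain ⟨m, hm, rfl⟩ := hx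
        refine ⟨1 ⊗ₜ[A] ⟨dilFrac a i m, Algebra.subset_adjoin
          (Set.mem_iUnion.2 ⟨i, Set.mem_image_of_mem _ hm⟩)⟩, ?_⟩
        show phiMap a B M _ = _
        rw [phiMap_tmul, map_one, one_mul, locMapBase_dilFrac]
    | zero =>
        show Localization.mk 0 _ ∈ _
        rw [Localization.mk_zero]
        exact zero_mem _
    | add x y _ _ hx hy =>
        show Localization.mk (x + y) _ ∈ _
        rw [← Localization.add_mk_self]
        exact add_mem hx hy
    | smul b x _ hx =>
        show Localization.mk (b • x) _ ∈ _
        rw [← Localization.smul_mk]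
        exact Subalgebra.smul_mem _ hx b

end Aux


/-- if `f : A → B` is flat then base change commutes with dilatation:
`B[{f(M_i)B / f(a_i)}] ≅ B ⊗_A A[{M_i/a_i}]` canonically as `B`-algebras. -/
theorem stmt14 {B : Type*} [CommRing B] [Algebra A B] [Module.Flat A B]
    (M : I → Ideal A) (a : I → A) :
    ∃ e : (B ⊗[A] ↥(dilatation M a)) ≃ₐ[B]
        ↥(dilatation (fun i => (M i).map (algebraMap A B))
            (fun i => algebraMap A B (a i))),
      ∀ x : ↥(dilatation M a),
        ((e (1 ⊗ₜ[A] x) :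
            Localization (dilSubmonoid fun i => algebraMap A B (a i))))
          = locMapBase a B ((x : Localization (dilSubmonoid a))) := by
  refine ⟨(AlgEquiv.ofInjective (phiMap a B M) (phiMap_injective a B M)).trans
    (Subalgebra.equivOfEq _ _ (phiMap_range a B M)), fun x => ?_⟩
  rw [AlgEquiv.trans_apply]
  have h1 : ((Subalgebra.equivOfEq _ _ (phiMap_range a B M)
      ((AlgEquiv.ofInjective (phiMap a B M) (phiMap_injective a B M)) (1 ⊗ₜ[A] x)) :
        Localization (dilSubmonoid fun i => algebraMap A B (a i))))
      = (((AlgEquiv.ofInjective (phiMap a B M) (phiMap_injective a B M)) (1 ⊗ₜ[A] x) :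
          (phiMap a B M).range) : Localization (dilSubmonoid fun i => algebraMap A B (a i))) := by
    rfl
  rw [h1, AlgEquiv.ofInjective_apply, phiMap_tmul, map_one, one_mul]
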